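/- Let ρ < 0 and μ > 0. The quadratic equation μκ² − ρκ + ρμ = 0 (characterizing constant-curvature critical curves of Θ_μ in the hyperbolic plane H²(ρ)) has exactly two real solutions κ₁ and κ₂; one of them satisfies 0 < κ₂ < √(−ρ), hence κ₂² < −ρ (an hypercycle), and the other satisfies κ₁ < −√(−ρ), hence κ₁² > −ρ (a circle). -/

import Mathlib

/-- For `ρ < 0` and `μ > 0`, the quadratic equation `μκ² − ρκ + ρμ = 0` (characterizing
constant-curvature critical curves of the energy `Θ_μ` in the hyperbolic plane `H²(ρ)`)
has exactly two real solutions `κ₁, κ₂`: one with `0 < κ₂ < √(−ρ)`, hence `κ₂² < −ρ`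
(an hypercycle), and one with `κ₁ < −√(−ρ)`, hence `κ₁² > −ρ` (a circle). -/
theorem constant_curvature_critical_hyperbolic (μ ρ : ℝ) (hρ : ρ < 0) (hμ : 0 < μ) :
    ∃ κ₁ κ₂ : ℝ,
      (∀ κ : ℝ, μ * κ ^ 2 - ρ * κ + ρ * μ = 0 ↔ κ = κ₁ ∨ κ = κ₂) ∧
      κ₁ ≠ κ₂ ∧
      0 < κ₂ ∧ κ₂ < Real.sqrt (-ρ) ∧ κ₂ ^ 2 < -ρ ∧
      κ₁ < -Real.sqrt (-ρ) ∧ κ₁ ^ 2 > -ρ := by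
  set s := Real.sqrt (ρ ^ 2 - 4 * μ ^ 2 * ρ) with hs_def
  have hDpos : (0:ℝ) < ρ ^ 2 - 4 * μ ^ 2 * ρ := by nlinarith
  have hs2 : s ^ 2 = ρ ^ 2 - 4 * μ ^ 2 * ρ := Real.sq_sqrt hDpos.le
  have hs0 : 0 < s := Real.sqrt_pos.mpr hDpos
  set t := Real.sqrt (-ρ) with ht_def
  have ht2 : t ^ 2 = -ρ := Real.sq_sqrt (by linarith)
  have ht0 : 0 < t := Real.sqrt_pos.mpr (by linarith)
  have hμ2 : (2:ℝ) * μ ≠ 0 := by positivity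
  refine ⟨(ρ - s) / (2 * μ), (ρ + s) / (2 * μ), ?_, ?_, ?_, ?_, ?_, ?_, ?_⟩
  · intro κ
    have key : μ * κ ^ 2 - ρ * κ + ρ * μ
        = μ * (κ - (ρ - s) / (2 * μ)) * (κ - (ρ + s) / (2 * μ)) := by
      field_simp
      ring_nf
      nlinarith [hs2]
    constructor
    · intro h
      rw [key] at h
      rcases mul_eq_zero.mp h with h | h
      · rcases mul_eq_zero.mp h with h | h
        · exact absurd h (ne_of_gt hμ)
        · left; linarith [sub_eq_zero.mp h]
      · right; linarith [sub_eq_zero.mp h]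
    · rintro (rfl | rfl) <;> rw [key] <;> field_simp <;> ring
  · intro h
    have : ρ - s = ρ + s := by
      field_simp at h; linarith
    linarith
  · have : 0 < ρ + s := by
      nlinarith [hs2, hs0, mul_pos (mul_pos hμ hμ) (neg_pos.mpr hρ)]
    positivity
  · rw [div_lt_iff₀ (by positivity)]
    nlinarith [mul_pos hμ ht0]
  · have h2 : (ρ + s) / (2 * μ) < t := by
      rw [div_lt_iff₀ (by positivity)]
      nlinarith [mul_pos hμ ht0]
    have h0 : 0 < (ρ + s) / (2 * μ) := by
      have : 0 < ρ + s := by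
        nlinarith [hs2, hs0, mul_pos (mul_pos hμ hμ) (neg_pos.mpr hρ)]
      positivity
    nlinarith [h2, h0, ht2]
  · rw [div_lt_iff₀ (by positivity)]
    nlinarith [mul_pos hμ ht0]
  · have h1 : (ρ - s) / (2 * μ) < -t := by
      rw [div_lt_iff₀ (by positivity)]
      nlinarith [mul_pos hμ ht0]
    nlinarith [h1, ht0, ht2]
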